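/- arXiv:1007.2769 — 2 statements merged into one kernel-verified Lean document; each statement's English description precedes it below -/
import Mathlib

section
/- Two absolute involutions v, w of G(r,n) are S_n-conjugate (i.e. there exists τ ∈ Perm(Fin n) with w = τ·v·τ⁻¹ under absolute conjugation) if and only if fix_i(v) = fix_i(w) and pair_i(v) = pair_i(w) for every i ∈ ZMod r. -/
noncomputable section

/-- The wreath product `G(r,n) = C_r ≀ S_n`, realized as pairs of a color vector
`z : Fin n → ZMod r` and a permutation `p` of `Fin n`. -/
@[ext] structure WreathG (r n : ℕ) where
  z : Fin n → ZMod r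
  p : Equiv.Perm (Fin n)

namespace WreathG

variable {r n : ℕ}

instance : One (WreathG r n) := ⟨⟨0, 1⟩⟩
instance : Mul (WreathG r n) := ⟨fun g h => ⟨g.z + h.z ∘ g.p.symm, g.p * h.p⟩⟩
instance : Inv (WreathG r n) := ⟨fun g => ⟨-(g.z ∘ g.p), g.p⁻¹⟩⟩

@[simp] theorem one_z : (1 : WreathG r n).z = 0 := rfl
@[simp] theorem one_p : (1 : WreathG r n).p = 1 := rfl
@[simp] theorem mul_z (a b : WreathG r n) : (a * b).z = a.z + b.z ∘ a.p.symm := rfl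
@[simp] theorem mul_p (a b : WreathG r n) : (a * b).p = a.p * b.p := rfl
@[simp] theorem inv_z (a : WreathG r n) : (a⁻¹).z = -(a.z ∘ a.p) := rfl
@[simp] theorem inv_p (a : WreathG r n) : (a⁻¹).p = a.p⁻¹ := rfl

instance : Group (WreathG r n) :=
  Group.ofLeftAxioms
    (fun a b c => by
      refine WreathG.ext ?_ (mul_assoc a.p b.p c.p)
      funext x
      show (a.z x + b.z (a.p.symm x)) + c.z ((a.p * b.p).symm x)
          = a.z x + (b.z (a.p.symm x) + c.z (b.p.symm (a.p.symm x)))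
      have h : (a.p * b.p).symm x = b.p.symm (a.p.symm x) := rfl
      rw [h, add_assoc])
    (fun a => by
      refine WreathG.ext ?_ (one_mul a.p)
      funext x
      show 0 + a.z ((1 : Equiv.Perm (Fin n)).symm x) = a.z x
      simp only [zero_add]
      rfl)
    (fun a => by
      refine WreathG.ext ?_ (inv_mul_cancel a.p)
      funext x
      show -(a.z (a.p x)) + a.z ((a.p⁻¹).symm x) = 0
      have h : (a.p⁻¹).symm x = a.p x := rfl
      rw [h, neg_add_cancel])

/-- An absolute involution of `G(r,n)`: `|v|² = 1` and `z ∘ |v| = z`. -/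
def IsAbsInv (v : WreathG r n) : Prop := v.p ^ 2 = 1 ∧ v.z ∘ v.p = v.z

instance (v : WreathG r n) : Decidable (IsAbsInv v) :=
  inferInstanceAs (Decidable (_ ∧ _))

/-- Absolute conjugation `τ·(z,σ)·τ⁻¹ = (z ∘ τ⁻¹, τστ⁻¹)`. -/
def aconj (τ : Equiv.Perm (Fin n)) (v : WreathG r n) : WreathG r n :=
  ⟨v.z ∘ τ.symm, τ * v.p * τ⁻¹⟩

theorem IsAbsInv.aconj {v : WreathG r n} (h : IsAbsInv v) (τ : Equiv.Perm (Fin n)) :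
    IsAbsInv (WreathG.aconj τ v) := by
  obtain ⟨h1, h2⟩ := h
  constructor
  · show (τ * v.p * τ⁻¹) ^ 2 = 1
    have key : (τ * v.p * τ⁻¹) * (τ * v.p * τ⁻¹) = τ * (v.p * v.p) * τ⁻¹ := by
      simp [mul_assoc]
    rw [sq, key, ← sq, h1, mul_one, mul_inv_cancel]
  · funext x
    have := congrFun h2 (τ.symm x)
    simpa [WreathG.aconj, Function.comp] using this

/-- `⟨g,v⟩ = ∑ i z_i(g)·z_i(v) ∈ ZMod r`. -/
def pairing (g v : WreathG r n) : ZMod r := ∑ i, g.z i * v.z i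

/-- `inv_v(g)`: the number of pairs `i < j` with `|v|(i) = j` and `|g|(i) > |g|(j)`. -/
def invv (v g : WreathG r n) : ℕ :=
  Nat.card {q : Fin n × Fin n // q.1 < q.2 ∧ v.p q.1 = q.2 ∧ g.p q.2 < g.p q.1}

/-- The number of inversions of a permutation. -/
def invPerm (σ : Equiv.Perm (Fin n)) : ℕ :=
  Nat.card {q : Fin n × Fin n // q.1 < q.2 ∧ σ q.2 < σ q.1}

/-- `fix_i(v)`: the number of `j` with `|v|(j) = j` and `z_j(v) = i`. -/
def fixc (v : WreathG r n) (i : ZMod r) : ℕ :=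
  Nat.card {j : Fin n // v.p j = j ∧ v.z j = i}

/-- `pair_i(v)`: the number of pairs `j < k` with `|v|(j) = k` and `z_j(v) = z_k(v) = i`. -/
def pairc (v : WreathG r n) (i : ZMod r) : ℕ :=
  Nat.card {q : Fin n × Fin n // q.1 < q.2 ∧ v.p q.1 = q.2 ∧ v.z q.1 = i ∧ v.z q.2 = i}

instance : DecidableEq (WreathG r n) := fun a b =>
  decidable_of_iff (a.z = b.z ∧ a.p = b.p)
    (by constructor
        · rintro ⟨h1, h2⟩; exact WreathG.ext h1 h2
        · rintro rfl; exact ⟨rfl, rfl⟩)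

instance [NeZero r] : Fintype (WreathG r n) :=
  Fintype.ofEquiv ((Fin n → ZMod r) × Equiv.Perm (Fin n))
    { toFun := fun x => ⟨x.1, x.2⟩
      invFun := fun g => (g.z, g.p)
      left_inv := fun _ => rfl
      right_inv := fun _ => rfl }

end WreathG

/-- The set `I(r,n)` of absolute involutions, as a subtype. -/
abbrev AbsInv (r n : ℕ) := {v : WreathG r n // WreathG.IsAbsInv v}

/-- The model space `M`: the complex vector space with basis `{C_v : v ∈ I(r,n)}`. -/
abbrev ModelSpace (r n : ℕ) := AbsInv r n →₀ ℂ

/-- `ζ_r = exp(2πi/r)`. -/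
def zetaC (r : ℕ) : ℂ := Complex.exp (2 * Real.pi * Complex.I / r)

/-- `ζ_r` raised to an exponent in `ZMod r` (well defined since `ζ_r^r = 1`). -/
def zetaPow (r : ℕ) (a : ZMod r) : ℂ := zetaC r ^ a.val

/-- The Gelfand model operator `ϱ(g) C_v = ζ_r^{⟨g,v⟩} (−1)^{inv_v(g)} C_{|g|v|g|⁻¹}`. -/
def modelRho {r n : ℕ} (g : WreathG r n) :
    ModelSpace r n →ₗ[ℂ] ModelSpace r n :=
  Finsupp.lsum ℂ fun v =>
    ((zetaPow r (WreathG.pairing g v.1) * (-1 : ℂ) ^ WreathG.invv v.1 g) •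
      Finsupp.lsingle (⟨WreathG.aconj g.p v.1, v.2.aconj g.p⟩ : AbsInv r n))

/-- The auxiliary operator `φ(g) C_v = ζ_r^{⟨g,v⟩} C_{|g|v|g|⁻¹}`. -/
def modelPhi {r n : ℕ} (g : WreathG r n) :
    ModelSpace r n →ₗ[ℂ] ModelSpace r n :=
  Finsupp.lsum ℂ fun v =>
    ((zetaPow r (WreathG.pairing g v.1)) •
      Finsupp.lsingle (⟨WreathG.aconj g.p v.1, v.2.aconj g.p⟩ : AbsInv r n))


section AuxHelpers

-- general equivariant bijection lemma for fixed-point-free involutions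
lemma exists_halfEquiv {α : Type*} [LinearOrder α] (f : α → α)
    (hf2 : ∀ a, f (f a) = a) (hf1 : ∀ a, f a ≠ a) :
    ∃ E : α ≃ {a : α // a < f a} × Bool, ∀ a, E (f a) = ((E a).1, !(E a).2) := by
  have hlt : ∀ a, ¬ a < f a → f a < f (f a) := by
    intro a h
    rw [hf2]
    exact lt_of_le_of_ne (not_lt.mp h) (hf1 a)
  refine ⟨⟨fun a => if h : a < f a then (⟨a, h⟩, true) else (⟨f a, hlt a h⟩, false),
    fun m => if m.2 then m.1.1 else f m.1.1, ?_, ?_⟩, ?_⟩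
  · intro a
    by_cases h : a < f a
    · simp [h]
    · simp [h, hf2]
  · rintro ⟨⟨a, ha⟩, b⟩
    cases b
    · have h1 : ¬ f a < f (f a) := by rw [hf2]; exact not_lt.mpr ha.le
      simp [h1, hf2, asymm ha]
    · simp [ha]
  · intro a
    by_cases h : a < f a
    · have h1 : ¬ f a < f (f a) := by rw [hf2]; exact not_lt.mpr h.le
      simp [h, h1, hf2, asymm h]
    · have h1 : f a < f (f a) := hlt a h
      simp [h, h1]

lemma exists_equivariant {α β : Type*} [Fintype α] [LinearOrder α] [Fintype β] [LinearOrder β]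
    (f : α → α) (g : β → β) (hf2 : ∀ a, f (f a) = a) (hf1 : ∀ a, f a ≠ a)
    (hg2 : ∀ b, g (g b) = b) (hg1 : ∀ b, g b ≠ b)
    (hcard : Fintype.card α = Fintype.card β) :
    ∃ e : α ≃ β, ∀ a, e (f a) = g (e a) := by
  obtain ⟨E, hE⟩ := exists_halfEquiv f hf2 hf1
  obtain ⟨F, hF⟩ := exists_halfEquiv g hg2 hg1
  have hM : Fintype.card {a : α // a < f a} = Fintype.card {b : β // b < g b} := by
    have h1 := Fintype.card_congr E
    have h2 := Fintype.card_congr F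
    rw [Fintype.card_prod, Fintype.card_bool] at h1 h2
    omega
  let u := Fintype.equivOfCardEq hM
  refine ⟨E.trans ((u.prodCongr (Equiv.refl Bool)).trans F.symm), ?_⟩
  intro a
  have key : ∀ (m : {b : β // b < g b}) (b : Bool), g (F.symm (m, b)) = F.symm (m, !b) := by
    intro m b
    have h := hF (F.symm (m, b))
    rw [F.apply_symm_apply] at h
    rw [← h, F.symm_apply_apply]
  rcases hp : E a with ⟨m, b⟩
  simp only [Equiv.trans_apply, Equiv.prodCongr_apply, hE, hp, Prod.map, Equiv.refl_apply, id]
  exact (key (u m) b).symm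

variable {r n : ℕ}

lemma WG_pSq {v : WreathG r n} (hv : v.IsAbsInv) (j : Fin n) : v.p (v.p j) = j := by
  have h : (v.p * v.p) j = (1 : Equiv.Perm (Fin n)) j := by rw [← sq, hv.1]
  simpa using h

lemma WG_zP {v : WreathG r n} (hv : v.IsAbsInv) (j : Fin n) : v.z (v.p j) = v.z j :=
  congrFun hv.2 j

/-- The "type" of an index: its color and whether it is a fixed point. -/
def WG_t (v : WreathG r n) (j : Fin n) : ZMod r × Bool := (v.z j, decide (v.p j = j))

lemma WG_t_p {v : WreathG r n} (hv : v.IsAbsInv) (j : Fin n) : WG_t v (v.p j) = WG_t v j := by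
  have h2 : (v.p (v.p j) = v.p j) ↔ (v.p j = j) := by
    constructor
    · intro h; exact v.p.injective h
    · intro h; rw [h]; exact h
  simp [WG_t, WG_zP hv j, h2]

lemma WG_card_moved {v : WreathG r n} (hv : v.IsAbsInv) (i : ZMod r) :
    Nat.card {j : Fin n // v.p j ≠ j ∧ v.z j = i} = 2 * WreathG.pairc v i := by
  have hsq := WG_pSq hv
  have hz := WG_zP hv
  have e : {j : Fin n // v.p j ≠ j ∧ v.z j = i} ≃
      {q : Fin n × Fin n // q.1 < q.2 ∧ v.p q.1 = q.2 ∧ v.z q.1 = i ∧ v.z q.2 = i} × Bool := by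
    refine ⟨fun x => if h : x.1 < v.p x.1
        then (⟨(x.1, v.p x.1), h, rfl, x.2.2, by rw [hz]; exact x.2.2⟩, true)
        else (⟨(v.p x.1, x.1), lt_of_le_of_ne (not_lt.mp h) x.2.1, hsq x.1,
            by rw [hz]; exact x.2.2, x.2.2⟩, false),
      fun m => if m.2
        then ⟨m.1.1.1, by rw [m.1.2.2.1]; exact (ne_of_gt m.1.2.1), m.1.2.2.2.1⟩
        else ⟨m.1.1.2, by rw [← m.1.2.2.1, hsq, m.1.2.2.1]; exact ne_of_lt m.1.2.1,
            m.1.2.2.2.2⟩, ?_, ?_⟩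
    · rintro ⟨x, hx⟩
      by_cases h : x < v.p x
      · simp [h]
      · simp [h]
    · rintro ⟨⟨⟨a, b⟩, hlt, hab, ha, hb⟩, c⟩
      have hlt' : a < b := hlt
      have hab' : v.p a = b := hab
      cases c
      · have h1 : v.p b = a := by rw [← hab', hsq]
        simp [h1, asymm hlt', hab']
      · simp [hab', hlt']
  rw [Nat.card_congr e, Nat.card_prod, WreathG.pairc]
  simp [mul_comm]

lemma WG_card_color (v : WreathG r n) (i : ZMod r) :
    Nat.card {j : Fin n // v.z j = i} =
      WreathG.fixc v i + Nat.card {j : Fin n // v.p j ≠ j ∧ v.z j = i} := by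
  rw [WreathG.fixc]
  simp only [Nat.card_eq_fintype_card, Fintype.card_subtype]
  have h1 : (Finset.univ.filter fun j : Fin n => v.p j = j ∧ v.z j = i)
      = (Finset.univ.filter fun j : Fin n => v.z j = i).filter (fun j => v.p j = j) := by
    ext j; simp [and_comm]
  have h2 : (Finset.univ.filter fun j : Fin n => v.p j ≠ j ∧ v.z j = i)
      = (Finset.univ.filter fun j : Fin n => v.z j = i).filter (fun j => ¬ v.p j = j) := by
    ext j; simp [and_comm]
  rw [h1, h2, Finset.card_filter_add_card_filter_not]

end AuxHelpers

/-- Two absolute involutions of `G(r,n)` are `S_n`-conjugate if and only if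
they have the same statistics `fix_i` and `pair_i` for every `i ∈ ZMod r`. -/
theorem sConjugate_iff_same_statistics (r n : ℕ) [NeZero r] (hn : 0 < n)
    (v w : WreathG r n) (hv : WreathG.IsAbsInv v) (hw : WreathG.IsAbsInv w) :
    (∃ τ : Equiv.Perm (Fin n), w = WreathG.aconj τ v) ↔
      (∀ i : ZMod r, WreathG.fixc v i = WreathG.fixc w i ∧
        WreathG.pairc v i = WreathG.pairc w i) := by
  constructor
  · rintro ⟨τ, rfl⟩
    intro i
    have hfix : WreathG.fixc v i = WreathG.fixc (WreathG.aconj τ v) i := by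
      refine Nat.card_congr (Equiv.subtypeEquiv τ fun j => ?_)
      simp [WreathG.aconj, Equiv.Perm.mul_apply]
    have hcol : Nat.card {j : Fin n // v.z j = i}
        = Nat.card {j : Fin n // (WreathG.aconj τ v).z j = i} := by
      refine Nat.card_congr (Equiv.subtypeEquiv τ fun j => ?_)
      simp [WreathG.aconj]
    refine ⟨hfix, ?_⟩
    have k1 := WG_card_color v i
    have k2 := WG_card_color (WreathG.aconj τ v) i
    have k3 := WG_card_moved hv i
    have k4 := WG_card_moved (hv.aconj τ) i
    omega
  · intro h
    have hvsq := WG_pSq hv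
    have hwsq := WG_pSq hw
    have hfib : ∀ k : ZMod r × Bool,
        Fintype.card {j : Fin n // WG_t v j = k} = Fintype.card {j : Fin n // WG_t w j = k} := by
      rintro ⟨i, b⟩
      cases b
      · -- moved fiber
        have e1 : {j : Fin n // WG_t v j = (i, false)} ≃ {j : Fin n // v.p j ≠ j ∧ v.z j = i} :=
          Equiv.subtypeEquiv (Equiv.refl _) fun j => by
            simp [WG_t, Prod.ext_iff, and_comm]
        have e2 : {j : Fin n // WG_t w j = (i, false)} ≃ {j : Fin n // w.p j ≠ j ∧ w.z j = i} :=
          Equiv.subtypeEquiv (Equiv.refl _) fun j => by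
            simp [WG_t, Prod.ext_iff, and_comm]
        rw [Fintype.card_congr e1, Fintype.card_congr e2,
          ← Nat.card_eq_fintype_card, ← Nat.card_eq_fintype_card,
          WG_card_moved hv i, WG_card_moved hw i, (h i).2]
      · -- fixed fiber
        have e1 : {j : Fin n // WG_t v j = (i, true)} ≃ {j : Fin n // v.p j = j ∧ v.z j = i} :=
          Equiv.subtypeEquiv (Equiv.refl _) fun j => by
            simp [WG_t, Prod.ext_iff, and_comm]
        have e2 : {j : Fin n // WG_t w j = (i, true)} ≃ {j : Fin n // w.p j = j ∧ w.z j = i} :=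
          Equiv.subtypeEquiv (Equiv.refl _) fun j => by
            simp [WG_t, Prod.ext_iff, and_comm]
        rw [Fintype.card_congr e1, Fintype.card_congr e2,
          ← Nat.card_eq_fintype_card, ← Nat.card_eq_fintype_card]
        exact (h i).1
    have H : ∀ k : ZMod r × Bool, ∃ e : {j : Fin n // WG_t v j = k} ≃ {j : Fin n // WG_t w j = k},
        ∀ (x : Fin n) (hx : WG_t v x = k),
          (e ⟨v.p x, (WG_t_p hv x).trans hx⟩ : Fin n) = w.p (e ⟨x, hx⟩ : Fin n) := by
      rintro ⟨i, b⟩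
      cases b
      · -- moved fiber: use equivariant bijection
        have hvmem : ∀ x : {j : Fin n // WG_t v j = (i, false)}, WG_t v (v.p x.1) = (i, false) :=
          fun x => (WG_t_p hv x.1).trans x.2
        have hwmem : ∀ x : {j : Fin n // WG_t w j = (i, false)}, WG_t w (w.p x.1) = (i, false) :=
          fun x => (WG_t_p hw x.1).trans x.2
        have hvne : ∀ x : {j : Fin n // WG_t v j = (i, false)}, v.p x.1 ≠ x.1 := by
          intro x
          have := congrArg Prod.snd x.2
          simpa [WG_t] using this
        have hwne : ∀ x : {j : Fin n // WG_t w j = (i, false)}, w.p x.1 ≠ x.1 := by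
          intro x
          have := congrArg Prod.snd x.2
          simpa [WG_t] using this
        obtain ⟨e, he⟩ := exists_equivariant
          (f := fun x : {j : Fin n // WG_t v j = (i, false)} => ⟨v.p x.1, hvmem x⟩)
          (g := fun x : {j : Fin n // WG_t w j = (i, false)} => ⟨w.p x.1, hwmem x⟩)
          (fun a => Subtype.ext (hvsq a.1)) (fun a => fun hc => hvne a (congrArg Subtype.val hc))
          (fun a => Subtype.ext (hwsq a.1)) (fun a => fun hc => hwne a (congrArg Subtype.val hc))
          (hfib (i, false))
        refine ⟨e, fun x hx => ?_⟩
        have := congrArg Subtype.val (he ⟨x, hx⟩)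
        simpa using this
      · -- fixed fiber: any bijection works
        refine ⟨Fintype.equivOfCardEq (hfib (i, true)), fun x hx => ?_⟩
        have hxf : v.p x = x := by
          have := congrArg Prod.snd hx
          simpa [WG_t] using this
        have hmk : (⟨v.p x, (WG_t_p hv x).trans hx⟩ : {j : Fin n // WG_t v j = (i, true)})
            = ⟨x, hx⟩ := Subtype.ext hxf
        rw [hmk]
        set y := Fintype.equivOfCardEq (hfib (i, true)) ⟨x, hx⟩ with hy
        have hyf : w.p y.1 = y.1 := by
          have := congrArg Prod.snd y.2
          simpa [WG_t] using this
        exact hyf.symm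
    choose ψ hψ using H
    set τ : Equiv.Perm (Fin n) :=
      (Equiv.sigmaFiberEquiv (WG_t v)).symm.trans
        ((Equiv.sigmaCongrRight ψ).trans (Equiv.sigmaFiberEquiv (WG_t w))) with hτ
    have hτ_apply : ∀ j : Fin n, τ j = (ψ (WG_t v j) ⟨j, rfl⟩ : Fin n) := fun j => rfl
    have hτ_t : ∀ j : Fin n, WG_t w (τ j) = WG_t v j := by
      intro j
      rw [hτ_apply]
      exact (ψ (WG_t v j) ⟨j, rfl⟩).2
    have hcast : ∀ (k k' : ZMod r × Bool) (hkk : k = k') (x : Fin n) (hx : WG_t v x = k)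
        (hx' : WG_t v x = k'), (ψ k ⟨x, hx⟩ : Fin n) = (ψ k' ⟨x, hx'⟩ : Fin n) := by
      rintro k k' rfl x hx hx'; rfl
    have hτ_p : ∀ j : Fin n, τ (v.p j) = w.p (τ j) := by
      intro j
      rw [hτ_apply, hτ_apply]
      rw [hcast (WG_t v (v.p j)) (WG_t v j) (WG_t_p hv j) (v.p j) rfl ((WG_t_p hv j).trans rfl)]
      exact hψ (WG_t v j) j rfl
    refine ⟨τ, ?_⟩
    refine WreathG.ext ?_ ?_
    · funext x
      show w.z x = v.z (τ.symm x)
      have := congrArg Prod.fst (hτ_t (τ.symm x))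
      simpa [WG_t] using this
    · refine Equiv.ext fun x => ?_
      show w.p x = τ (v.p (τ.symm x))
      rw [hτ_p, τ.apply_symm_apply]
end
end

section
/- Fix r ≥ 1 and m ≥ 1 and work inside G(r,2m). Let G(r,2m−1) = {g ∈ G(r,2m) : |g|(2m) = 2m and z_{2m}(g) = 0} and G(r,2m−2) = {g ∈ G(r,2m) : |g|(j) = j and z_j(g) = 0 for j ∈ {2m−1,2m}}. Let I⁰_{2m} = {v ∈ I(r,2m) : |v| is fixed-point-free} and I⁰_{2m−2} = {v ∈ I(r,2m) : |v|(j) = j and z_j(v) = 0 for j ∈ {2m−1,2m}, and |v|(j) ≠ j for all j ≤ 2m−2}. Then for every g ∈ G(r,2m−1): r^{2m−2}·(2m−2)! · Σ_{v ∈ I⁰_{2m}, |g|v|g|⁻¹ = v} ζ_r^{⟨g,v⟩} = Σ_{x ∈ G(r,2m−1) with x⁻¹gx ∈ G(r,2m−2)} Σ_{w ∈ I⁰_{2m−2}, |x⁻¹gx| w |x⁻¹gx|⁻¹ = w} ζ_r^{⟨x⁻¹gx, w⟩}. (This identity of class functions says that the character of the restriction to G(r,2m−1) of the representation φ of G(r,2m)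 on the span of {C_v : v ∈ I⁰_{2m}} equals the induced character from the representation φ of G(r,2m−2) on the span of {C_w : w ∈ I⁰_{2m−2}}.) -/
noncomputable section

section Helpers
open Finset Equiv

set_option linter.unusedSectionVars false

theorem Equiv.Perm.inv_apply_self {α : Type*} (f : Equiv.Perm α) (x : α) : f⁻¹ (f x) = x :=
  f.symm_apply_apply x

theorem Equiv.Perm.apply_inv_self {α : Type*} (f : Equiv.Perm α) (x : α) : f (f⁻¹ x) = x :=
  f.apply_symm_apply x

namespace WreathG

variable {r n : ℕ}

@[simp] lemma aconj_z' (σ : Perm (Fin n)) (v : WreathG r n) : (aconj σ v).z = v.z ∘ σ.symm := rfl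
@[simp] lemma aconj_p' (σ : Perm (Fin n)) (v : WreathG r n) : (aconj σ v).p = σ * v.p * σ⁻¹ := rfl

lemma aconj_aconj (σ τ : Perm (Fin n)) (v : WreathG r n) :
    aconj σ (aconj τ v) = aconj (σ * τ) v := by
  refine WreathG.ext ?_ ?_
  · funext i; rfl
  · show σ * (τ * v.p * τ⁻¹) * σ⁻¹ = (σ * τ) * v.p * (σ * τ)⁻¹
    group

lemma aconj_one (v : WreathG r n) : aconj (1 : Perm (Fin n)) v = v := by
  refine WreathG.ext ?_ ?_
  · funext i; rfl
  · show 1 * v.p * 1⁻¹ = v.p; group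

lemma aconj_cancel_left (σ : Perm (Fin n)) (v : WreathG r n) :
    aconj σ⁻¹ (aconj σ v) = v := by
  rw [aconj_aconj, inv_mul_cancel, aconj_one]

lemma aconj_inv_cancel (σ : Perm (Fin n)) (v : WreathG r n) :
    aconj σ (aconj σ⁻¹ v) = v := by
  rw [aconj_aconj, mul_inv_cancel]
  refine WreathG.ext ?_ ?_
  · funext i; rfl
  · show 1 * v.p * 1⁻¹ = v.p; group

lemma conj_p_apply (x g : WreathG r n) (j : Fin n) :
    (x⁻¹ * g * x).p j = x.p⁻¹ (g.p (x.p j)) := rfl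

lemma conj_z_apply (x g : WreathG r n) (j : Fin n) :
    (x⁻¹ * g * x).z j = - x.z (x.p j) + g.z (x.p j) + x.z (g.p⁻¹ (x.p j)) := by
  show (-(x.z ∘ x.p) + g.z ∘ (x.p⁻¹).symm) j + x.z ((x.p⁻¹ * g.p).symm j) = _
  have h1 : (x.p⁻¹).symm j = x.p j := rfl
  have h2 : (x.p⁻¹ * g.p).symm j = g.p⁻¹ (x.p j) := by
    show ((x.p⁻¹ * g.p)⁻¹) j = _
    rw [mul_inv_rev, inv_inv]
    rfl
  simp [h1, h2, Function.comp]

lemma IsAbsInv.p_p {v : WreathG r n} (h : IsAbsInv v) (j : Fin n) : v.p (v.p j) = j := by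
  have h2 : v.p * v.p = 1 := by rw [← sq, h.1]
  rw [← Equiv.Perm.mul_apply, h2, Equiv.Perm.one_apply]

lemma IsAbsInv.z_p {v : WreathG r n} (h : IsAbsInv v) (j : Fin n) : v.z (v.p j) = v.z j :=
  congrFun h.2 j

lemma fix_comm {gp : Perm (Fin n)} {v : WreathG r n} (h : aconj gp v = v) (j : Fin n) :
    gp (v.p j) = v.p (gp j) := by
  have hp := congrArg WreathG.p h
  simp only [aconj_p'] at hp
  conv_rhs => rw [← hp]
  simp [Equiv.Perm.mul_apply]

lemma fix_z_inv {gp : Perm (Fin n)} {v : WreathG r n} (h : aconj gp v = v) (j : Fin n) :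
    v.z (gp⁻¹ j) = v.z j := by
  have hz := congrArg WreathG.z h
  exact congrFun hz j

lemma fix_z {gp : Perm (Fin n)} {v : WreathG r n} (h : aconj gp v = v) (j : Fin n) :
    v.z (gp j) = v.z j := by
  have := fix_z_inv h (gp j)
  rw [Equiv.Perm.inv_apply_self] at this
  rw [← this]

end WreathG
end Helpers
section Zeta
set_option linter.unusedSectionVars false
variable {r : ℕ} [NeZero r]

lemma zetaC_prim : IsPrimitiveRoot (zetaC r) r := by
  have h := Complex.isPrimitiveRoot_exp r (NeZero.ne r)
  have he : zetaC r = Complex.exp (2 * ↑Real.pi * Complex.I / r) := by rw [zetaC]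
  rwa [he]

lemma zetaPow_natCast (k : ℕ) : zetaPow r (k : ZMod r) = zetaC r ^ k := by
  have h1 : zetaC r ^ r = 1 := zetaC_prim.pow_eq_one
  rw [zetaPow, ZMod.val_natCast]
  conv_rhs => rw [← Nat.div_add_mod k r]
  rw [pow_add, pow_mul, h1, one_pow, one_mul]

lemma zetaPow_add (a b : ZMod r) : zetaPow r (a + b) = zetaPow r a * zetaPow r b := by
  have h : a + b = ((a.val + b.val : ℕ) : ZMod r) := by
    push_cast [ZMod.natCast_val, ZMod.cast_id]; ring
  rw [h, zetaPow_natCast, pow_add, zetaPow, zetaPow]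

lemma zetaPow_zero' : zetaPow r 0 = 1 := by
  rw [zetaPow]; simp

lemma zetaPow_ne_one {s : ZMod r} (hs : s ≠ 0) : zetaPow r s ≠ 1 := by
  rw [zetaPow]
  apply zetaC_prim.pow_ne_one_of_pos_of_lt
  · exact (fun h => hs (by rwa [← ZMod.val_eq_zero]))
  · exact ZMod.val_lt s

lemma sum_zetaPow_mul (s : ZMod r) :
    ∑ c : ZMod r, zetaPow r (s * c) = if s = 0 then (r : ℂ) else 0 := by
  split_ifs with h
  · subst h; simp [ZMod.card, zetaPow_zero']
  · have key : zetaPow r s * ∑ c : ZMod r, zetaPow r (s * c)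
        = ∑ c : ZMod r, zetaPow r (s * c) := by
      rw [Finset.mul_sum]
      refine Fintype.sum_equiv (Equiv.addRight 1) _ _ (fun c => ?_)
      rw [← zetaPow_add]
      congr 1
      simp [Equiv.addRight, mul_add]
      ring
    have h2 : (zetaPow r s - 1) * ∑ c : ZMod r, zetaPow r (s * c) = 0 := by
      rw [sub_mul, key, one_mul, sub_self]
    rcases mul_eq_zero.mp h2 with h3 | h3
    · exact absurd (sub_eq_zero.mp h3) (zetaPow_ne_one h)
    · exact h3
end Zeta
section Count
open Equiv Finset
variable {n : ℕ}

lemma card_ne_subtype (e : Fin n) : Fintype.card {j : Fin n // j ≠ e} = n - 1 := by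
  simp [Fintype.card_subtype_compl, Fintype.card_subtype_eq]

lemma card_ne2_subtype (d e : Fin n) (hde : d ≠ e) :
    Fintype.card {j : Fin n // j ≠ e ∧ j ≠ d} = n - 2 := by
  have key : Fintype.card {j : Fin n // ¬(j = e ∨ j = d)} = n - 2 := by
    rw [Fintype.card_subtype_compl]
    have h2 : Fintype.card {j : Fin n // j = e ∨ j = d} = 2 := by
      rw [Fintype.card_subtype]
      have : (univ.filter (fun j : Fin n => j = e ∨ j = d)) = {e, d} := by
        ext j; simp
      rw [this, card_insert_of_notMem (by simp [Ne.symm hde]), card_singleton]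
    rw [h2, Fintype.card_fin]
  rw [← key]
  exact Fintype.card_congr (Equiv.subtypeEquivRight (fun j => by push_neg; tauto))

lemma card_perm_fix (d e a : Fin n) (hde : d ≠ e) (hae : a ≠ e) :
    Fintype.card {σ : Perm (Fin n) // σ e = e ∧ σ d = a} = (n - 2).factorial := by
  have e1 : {σ : Perm (Fin n) // σ e = e ∧ σ d = a} ≃
      {σ : Perm (Fin n) // σ e = e ∧ σ d = d} := by
    refine ⟨fun σ => ⟨Equiv.swap a d * σ.1, ?_, ?_⟩, fun σ => ⟨Equiv.swap a d * σ.1, ?_, ?_⟩,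
      fun σ => ?_, fun σ => ?_⟩
    · simp [Perm.mul_apply, σ.2.1, Equiv.swap_apply_of_ne_of_ne (Ne.symm hae) (Ne.symm hde)]
    · simp [Perm.mul_apply, σ.2.2]
    · simp [Perm.mul_apply, σ.2.1, Equiv.swap_apply_of_ne_of_ne (Ne.symm hae) (Ne.symm hde)]
    · simp [Perm.mul_apply, σ.2.2]
    · ext j; simp [Perm.mul_apply]
    · ext j; simp [Perm.mul_apply]
  have e2 : {σ : Perm (Fin n) // σ e = e ∧ σ d = d} ≃
      {f : Perm (Fin n) // ∀ j, ¬(j ≠ e ∧ j ≠ d) → f j = j} :=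
    Equiv.subtypeEquivRight (fun σ => by
      constructor
      · rintro ⟨h1, h2⟩ j hj
        push_neg at hj
        by_cases hje : j = e
        · subst hje; exact h1
        · rw [hj hje]; exact h2
      · intro h
        exact ⟨h e (by simp), h d (by simp)⟩)
  have e3 := (Equiv.Perm.subtypeEquivSubtypePerm (fun j : Fin n => j ≠ e ∧ j ≠ d)).symm
  rw [Fintype.card_congr ((e1.trans e2).trans e3), Fintype.card_perm, card_ne2_subtype d e hde]

variable {r : ℕ} [NeZero r]

lemma card_colors_fix (e : Fin n) :
    Fintype.card {z : Fin n → ZMod r // z e = 0} = r ^ (n - 1) := by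
  have eq : {z : Fin n → ZMod r // z e = 0} ≃ ({j : Fin n // j ≠ e} → ZMod r) := by
    refine ⟨fun z j => z.1 j.1, fun f => ⟨fun j => if h : j = e then 0 else f ⟨j, h⟩, by simp⟩,
      fun z => ?_, fun f => ?_⟩
    · apply Subtype.ext; funext j
      by_cases h : j = e
      · subst h; simp [z.2]
      · simp [h]
    · funext j; simp [j.2]
  rw [Fintype.card_congr eq, Fintype.card_fun, ZMod.card, card_ne_subtype]

lemma card_X (d e a : Fin n) (hde : d ≠ e) (hae : a ≠ e) :
    (Finset.univ.filter
        (fun x : WreathG r n => x.p e = e ∧ x.p d = a ∧ x.z e = 0)).card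
      = r ^ (n - 1) * (n - 2).factorial := by
  rw [← Fintype.card_subtype]
  have eq : {x : WreathG r n // x.p e = e ∧ x.p d = a ∧ x.z e = 0} ≃
      ({z : Fin n → ZMod r // z e = 0} × {σ : Perm (Fin n) // σ e = e ∧ σ d = a}) := by
    refine ⟨fun x => (⟨x.1.z, x.2.2.2⟩, ⟨x.1.p, x.2.1, x.2.2.1⟩),
      fun y => ⟨⟨y.1.1, y.2.1⟩, y.2.2.1, y.2.2.2, y.1.2⟩, fun x => ?_, fun y => ?_⟩
    · apply Subtype.ext; rfl
    · rfl
  rw [Fintype.card_congr eq, Fintype.card_prod, card_colors_fix, card_perm_fix d e a hde hae]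
end Count
namespace WreathG
section Recolor
set_option linter.unusedSectionVars false
open Finset Equiv
variable {r n : ℕ} [NeZero r]

/-- Recolor the `|v|`-pair `{e, |v|(e)}` with the color `c`. -/
def recolorW (v : WreathG r n) (e : Fin n) (c : ZMod r) : WreathG r n :=
  ⟨fun i => if i = e ∨ i = v.p e then c else v.z i, v.p⟩

@[simp] lemma recolorW_p (v : WreathG r n) (e : Fin n) (c : ZMod r) :
    (recolorW v e c).p = v.p := rfl

lemma recolorW_z (v : WreathG r n) (e : Fin n) (c : ZMod r) (i : Fin n) :
    (recolorW v e c).z i = if i = e ∨ i = v.p e then c else v.z i := rfl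

lemma recolorW_isAbsInv {v : WreathG r n} (hv : IsAbsInv v) (e : Fin n) (c : ZMod r) :
    IsAbsInv (recolorW v e c) := by
  refine ⟨hv.1, ?_⟩
  funext i
  show (recolorW v e c).z (v.p i) = (recolorW v e c).z i
  rw [recolorW_z, recolorW_z]
  by_cases h : i = e ∨ i = v.p e
  · rcases h with h | h
    · subst h; simp
    · subst h
      rw [hv.p_p]
      simp
  · push_neg at h
    have h1 : v.p i ≠ e := fun hc => h.2 (by rw [← hc, hv.p_p])
    have h2 : v.p i ≠ v.p e := fun hc => h.1 (v.p.injective hc)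
    rw [if_neg (by tauto), if_neg (by tauto), hv.z_p]

lemma recolorW_fix {gp : Perm (Fin n)} {v : WreathG r n} (hfix : aconj gp v = v)
    {e : Fin n} (hge : gp e = e) (c : ZMod r) :
    aconj gp (recolorW v e c) = recolorW v e c := by
  have hp := congrArg WreathG.p hfix
  simp only [aconj_p'] at hp
  have hga : gp (v.p e) = v.p e := by rw [fix_comm hfix, hge]
  refine WreathG.ext ?_ ?_
  · funext i
    show (recolorW v e c).z (gp.symm i) = (recolorW v e c).z i
    have hsymm : gp.symm i = gp⁻¹ i := rfl
    rw [recolorW_z, recolorW_z, hsymm]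
    have c1 : gp⁻¹ i = e ↔ i = e := by
      rw [Equiv.Perm.inv_eq_iff_eq]
      constructor
      · intro h; rw [h, hge]
      · intro h; rw [h, hge]
    have c2 : gp⁻¹ i = v.p e ↔ i = v.p e := by
      rw [Equiv.Perm.inv_eq_iff_eq]
      constructor
      · intro h; rw [h, hga]
      · intro h; rw [h, hga]
    by_cases h : i = e ∨ i = v.p e
    · rw [if_pos (by rw [c1, c2]; exact h), if_pos h]
    · push_neg at h
      rw [if_neg (by rw [c1, c2]; tauto), if_neg (by tauto)]
      exact fix_z_inv hfix i
  · show gp * (recolorW v e c).p * gp⁻¹ = (recolorW v e c).p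
    exact hp

lemma pairing_recolorW (g : WreathG r n) {v : WreathG r n} {e : Fin n} (hv : IsAbsInv v)
    (hgz : g.z e = 0) (hze : v.z e = 0) (hne : v.p e ≠ e) (c : ZMod r) :
    pairing g (recolorW v e c) = pairing g v + g.z (v.p e) * c := by
  have hza : v.z (v.p e) = 0 := by rw [hv.z_p]; exact hze
  have key : ∀ i : Fin n, g.z i * (recolorW v e c).z i
      = g.z i * v.z i + (if i = v.p e then g.z (v.p e) * c else 0) := by
    intro i
    rw [recolorW_z]
    by_cases h1 : i = e
    · subst h1
      rw [if_pos (Or.inl rfl), if_neg (fun hc => hne hc.symm), hgz]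
      ring
    · by_cases h2 : i = v.p e
      · subst h2
        rw [if_pos (Or.inr rfl), if_pos rfl, hza]
        ring
      · rw [if_neg (by tauto), if_neg h2]
        ring
  unfold pairing
  calc ∑ i, g.z i * (recolorW v e c).z i
      = ∑ i, (g.z i * v.z i + (if i = v.p e then g.z (v.p e) * c else 0)) :=
        Finset.sum_congr rfl (fun i _ => key i)
    _ = (∑ i, g.z i * v.z i) + g.z (v.p e) * c := by
        rw [Finset.sum_add_distrib, Finset.sum_ite_eq' Finset.univ (v.p e)
          (fun _ => g.z (v.p e) * c)]
        simp

end Recolor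
end WreathG

section LHS
open Finset Equiv WreathG
variable {r n : ℕ} [NeZero r]

lemma lhs_recolor (g : WreathG r n) (e : Fin n)
    (hgp : g.p e = e) (hgz : g.z e = 0) :
    ∑ v ∈ Finset.univ.filter (fun v : AbsInv r n =>
        (∀ j, v.1.p j ≠ j) ∧ WreathG.aconj g.p v.1 = v.1),
      zetaPow r (WreathG.pairing g v.1)
    = (r : ℂ) * ∑ v ∈ Finset.univ.filter (fun v : AbsInv r n =>
        ((∀ j, v.1.p j ≠ j) ∧ WreathG.aconj g.p v.1 = v.1) ∧
          v.1.z e = 0 ∧ g.z (v.1.p e) = 0),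
      zetaPow r (WreathG.pairing g v.1) := by
  classical
  set A : Finset (AbsInv r n) := Finset.univ.filter (fun v : AbsInv r n =>
      (∀ j, v.1.p j ≠ j) ∧ WreathG.aconj g.p v.1 = v.1) with hA
  set A0 : Finset (AbsInv r n) := Finset.univ.filter (fun v : AbsInv r n =>
      ((∀ j, v.1.p j ≠ j) ∧ WreathG.aconj g.p v.1 = v.1) ∧ v.1.z e = 0) with hA0
  set ρ : AbsInv r n → ZMod r → AbsInv r n := fun v c =>
    if h : WreathG.IsAbsInv (WreathG.recolorW v.1 e c) then ⟨_, h⟩ else v with hρdef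
  have hρ : ∀ (v : AbsInv r n) (c : ZMod r), (ρ v c).1 = WreathG.recolorW v.1 e c :=
    fun v c => by simp only [hρdef, dif_pos (recolorW_isAbsInv v.2 e c)]
  -- membership facts
  have memA : ∀ v : AbsInv r n, v ∈ A ↔ ((∀ j, v.1.p j ≠ j) ∧ WreathG.aconj g.p v.1 = v.1) :=
    fun v => by simp [hA]
  have memA0 : ∀ v : AbsInv r n, v ∈ A0 ↔
      (((∀ j, v.1.p j ≠ j) ∧ WreathG.aconj g.p v.1 = v.1) ∧ v.1.z e = 0) :=
    fun v => by simp [hA0]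
  have hρA : ∀ v ∈ A, ∀ c, ρ v c ∈ A := by
    intro v hv c
    rw [memA] at hv ⊢
    constructor
    · intro j
      rw [hρ]
      exact hv.1 j
    · have := recolorW_fix hv.2 hgp c
      rw [← hρ v c] at this
      rw [hρ] at this ⊢
      exact this
  have hmaps : ∀ v ∈ A, ρ v 0 ∈ A0 := by
    intro v hv
    rw [memA0]
    refine ⟨(memA _).mp (hρA v hv 0), ?_⟩
    rw [hρ, recolorW_z]
    simp
  rw [← Finset.sum_fiberwise_of_maps_to hmaps (fun v => zetaPow r (WreathG.pairing g v.1))]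
  have inner : ∀ v0 ∈ A0, (∑ v ∈ A.filter (fun v => ρ v 0 = v0),
      zetaPow r (WreathG.pairing g v.1))
      = if g.z (v0.1.p e) = 0 then (r : ℂ) * zetaPow r (WreathG.pairing g v0.1) else 0 := by
    intro v0 hv0
    obtain ⟨⟨hfpf, hfix⟩, hze⟩ := (memA0 v0).mp hv0
    have hza : v0.1.z (v0.1.p e) = 0 := by rw [v0.2.z_p]; exact hze
    have hρ0 : ∀ c, ρ (ρ v0 c) 0 = v0 := by
      intro c
      apply Subtype.ext
      rw [hρ, hρ]
      refine WreathG.ext ?_ rfl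
      funext i
      rw [recolorW_z]
      show (if i = e ∨ i = (recolorW v0.1 e c).p e then 0
          else (recolorW v0.1 e c).z i) = v0.1.z i
      have hpe : (recolorW v0.1 e c).p e = v0.1.p e := rfl
      rw [hpe, recolorW_z]
      by_cases h : i = e ∨ i = v0.1.p e
      · rw [if_pos h]
        rcases h with h | h <;> subst h
        · exact hze.symm
        · exact hza.symm
      · rw [if_neg h, if_neg h]
    have hzc : ∀ c : ZMod r, (ρ v0 c).1.z e = c := by
      intro c
      rw [hρ, recolorW_z]
      simp
    have hleft : ∀ v ∈ A.filter (fun v => ρ v 0 = v0), ρ v0 (v.1.z e) = v := by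
      intro v hv
      rw [Finset.mem_filter] at hv
      obtain ⟨hvA, hfib⟩ := hv
      have hp : v.1.p = v0.1.p := by
        have := congrArg (fun u : AbsInv r n => u.1.p) hfib
        simpa [hρ] using this
      have hzz : ∀ i : Fin n, ¬(i = e ∨ i = v0.1.p e) → v.1.z i = v0.1.z i := by
        intro i hi
        have := congrArg (fun u : AbsInv r n => u.1.z i) hfib
        simp only [hρ, recolorW_z, hp] at this
        rwa [if_neg hi] at this
      apply Subtype.ext
      rw [hρ]
      refine WreathG.ext ?_ hp.symm
      funext i
      rw [recolorW_z]
      by_cases h : i = e ∨ i = v0.1.p e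
      · rw [if_pos h]
        rcases h with h | h <;> subst h
        · rfl
        · show v.1.z e = v.1.z (v0.1.p e)
          rw [← hp, v.2.z_p e]
      · rw [if_neg h]
        exact (hzz i h).symm
    have hpairρ : ∀ c : ZMod r, WreathG.pairing g (ρ v0 c).1
        = WreathG.pairing g v0.1 + g.z (v0.1.p e) * c := by
      intro c
      rw [hρ]
      exact pairing_recolorW g v0.2 hgz hze (fun hc => hfpf e hc) c
    have bij : ∑ v ∈ A.filter (fun v => ρ v 0 = v0), zetaPow r (WreathG.pairing g v.1)
        = ∑ c : ZMod r, zetaPow r (WreathG.pairing g v0.1 + g.z (v0.1.p e) * c) := by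
      refine Finset.sum_nbij' (i := fun v => v.1.z e) (j := fun c => ρ v0 c) ?_ ?_ ?_ ?_ ?_
      · intro v _; exact Finset.mem_univ _
      · intro c _
        rw [Finset.mem_filter]
        have hvA0 : v0 ∈ A := by rw [memA]; exact ⟨hfpf, hfix⟩
        exact ⟨hρA v0 hvA0 c, hρ0 c⟩
      · exact hleft
      · intro c _
        exact hzc c
      · intro v hv
        conv_lhs => rw [← hleft v hv]
        rw [hpairρ]
    rw [bij]
    have : ∀ c : ZMod r, zetaPow r (WreathG.pairing g v0.1 + g.z (v0.1.p e) * c)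
        = zetaPow r (WreathG.pairing g v0.1) * zetaPow r (g.z (v0.1.p e) * c) :=
      fun c => zetaPow_add _ _
    rw [Finset.sum_congr rfl (fun c _ => this c), ← Finset.mul_sum, sum_zetaPow_mul]
    split_ifs with h
    · ring
    · ring
  rw [Finset.sum_congr rfl inner, Finset.sum_ite, Finset.sum_const_zero, add_zero,
    hA0, Finset.filter_filter, Finset.mul_sum]
  apply Finset.sum_congr
  · apply Finset.filter_congr
    intro v _
    simp only [and_assoc]
  · intro v _; rfl
end LHS
namespace WreathG
section RHSHelp
set_option linter.unusedSectionVars false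
open Finset Equiv
variable {r n : ℕ} [NeZero r]

lemma conj_swap_fix {σ : Perm (Fin n)} {d e : Fin n} (hdd : σ d = d) (hee : σ e = e) :
    σ * Equiv.swap d e * σ⁻¹ = Equiv.swap d e := by
  rw [← Equiv.swap_apply_apply, hdd, hee]

/-- the lift `w ↦ (z_w, |w|·(d e))`. -/
def liftW (w : WreathG r n) (d e : Fin n) : WreathG r n := ⟨w.z, w.p * Equiv.swap d e⟩

@[simp] lemma liftW_z (w : WreathG r n) (d e : Fin n) : (liftW w d e).z = w.z := rfl
@[simp] lemma liftW_p (w : WreathG r n) (d e : Fin n) : (liftW w d e).p = w.p * Equiv.swap d e := rfl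

lemma liftW_p_apply (w : WreathG r n) (d e j : Fin n) :
    (liftW w d e).p j = w.p (Equiv.swap d e j) := rfl

lemma liftW_isAbsInv {w : WreathG r n} (hw : IsAbsInv w) {d e : Fin n}
    (hpd : w.p d = d) (hpe : w.p e = e) (hzd : w.z d = 0) (hze : w.z e = 0) :
    IsAbsInv (liftW w d e) := by
  constructor
  · rw [sq]
    apply Equiv.ext
    intro j
    show w.p (Equiv.swap d e (w.p (Equiv.swap d e j))) = j
    by_cases h1 : j = d
    · subst h1; rw [Equiv.swap_apply_left, hpe, Equiv.swap_apply_right, hpd]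
    · by_cases h2 : j = e
      · subst h2; rw [Equiv.swap_apply_right, hpd, Equiv.swap_apply_left, hpe]
      · rw [Equiv.swap_apply_of_ne_of_ne h1 h2]
        have k1 : w.p j ≠ d := fun hc => h1 (by rw [← hw.p_p j, hc, hpd])
        have k2 : w.p j ≠ e := fun hc => h2 (by rw [← hw.p_p j, hc, hpe])
        rw [Equiv.swap_apply_of_ne_of_ne k1 k2, hw.p_p]
  · funext j
    show w.z (w.p (Equiv.swap d e j)) = w.z j
    by_cases h1 : j = d
    · subst h1; rw [Equiv.swap_apply_left, hpe, hze, hzd]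
    · by_cases h2 : j = e
      · subst h2; rw [Equiv.swap_apply_right, hpd, hzd, hze]
      · rw [Equiv.swap_apply_of_ne_of_ne h1 h2, hw.z_p]

lemma pairing_aconj (g x u : WreathG r n) :
    pairing g (aconj x.p u) = ∑ j, g.z (x.p j) * u.z j := by
  unfold pairing
  refine (Fintype.sum_equiv x.p _ _ (fun j => ?_)).symm
  show g.z (x.p j) * u.z j = g.z (x.p j) * u.z (x.p.symm (x.p j))
  rw [Equiv.symm_apply_apply]

lemma pairing_conj (g x w : WreathG r n)
    (hwz : ∀ j, w.z ((x⁻¹ * g * x).p j) = w.z j) :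
    pairing (x⁻¹ * g * x) w = ∑ j, g.z (x.p j) * w.z j := by
  unfold pairing
  have expand : ∀ j, (x⁻¹ * g * x).z j * w.z j
      = (- x.z (x.p j) * w.z j + g.z (x.p j) * w.z j) + x.z (g.p⁻¹ (x.p j)) * w.z j := by
    intro j
    rw [conj_z_apply]
    ring
  rw [Finset.sum_congr rfl (fun j _ => expand j), Finset.sum_add_distrib,
    Finset.sum_add_distrib]
  have reindex : ∑ j, x.z (g.p⁻¹ (x.p j)) * w.z j = ∑ j, x.z (x.p j) * w.z j := by
    refine (Fintype.sum_equiv ((x⁻¹ * g * x).p) _ _ (fun j => ?_)).symm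
    rw [hwz j]
    congr 2
    show x.p j = g.p⁻¹ (x.p (x.p⁻¹ (g.p (x.p j))))
    rw [Equiv.Perm.apply_inv_self, Equiv.Perm.inv_apply_self]
  rw [reindex]
  have : ∑ j, - x.z (x.p j) * w.z j = - ∑ j, x.z (x.p j) * w.z j := by
    rw [← Finset.sum_neg_distrib]
    exact Finset.sum_congr rfl (fun j _ => by ring)
  rw [this]
  ring
end RHSHelp
end WreathG
namespace WreathG
section RHSMain
set_option linter.unusedSectionVars false
open Finset Equiv
variable {r n : ℕ} [NeZero r]

lemma phi_mem {g x w : WreathG r n} {d e : Fin n} (hde : d ≠ e)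
    (hd : ∀ j : Fin n, n - 2 ≤ j.val ↔ (j = d ∨ j = e))
    (hgz : g.z e = 0)
    (hxe : x.p e = e) (hxz : x.z e = 0)
    (hxc : ∀ j : Fin n, n - 2 ≤ j.val → ((x⁻¹ * g * x).p j = j ∧ (x⁻¹ * g * x).z j = 0))
    (hw : IsAbsInv w)
    (hw1 : ∀ j : Fin n, n - 2 ≤ j.val → (w.p j = j ∧ w.z j = 0))
    (hw2 : ∀ j : Fin n, j.val < n - 2 → w.p j ≠ j)
    (hwfix : aconj (x⁻¹ * g * x).p w = w) :
    (∀ j, (aconj x.p (liftW w d e)).p j ≠ j) ∧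
      aconj g.p (aconj x.p (liftW w d e)) = aconj x.p (liftW w d e) ∧
      (aconj x.p (liftW w d e)).z e = 0 ∧
      g.z ((aconj x.p (liftW w d e)).p e) = 0 := by
  have hdm : n - 2 ≤ d.val := (hd d).mpr (Or.inl rfl)
  have hem : n - 2 ≤ e.val := (hd e).mpr (Or.inr rfl)
  have hwpd : w.p d = d := (hw1 d hdm).1
  have hwpe : w.p e = e := (hw1 e hem).1
  have hwzd : w.z d = 0 := (hw1 d hdm).2
  have hwze : w.z e = 0 := (hw1 e hem).2
  have hhpd : (x⁻¹ * g * x).p d = d := (hxc d hdm).1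
  have hhpe : (x⁻¹ * g * x).p e = e := (hxc e hem).1
  have hhzd : (x⁻¹ * g * x).z d = 0 := (hxc d hdm).2
  have hp_eq : (x⁻¹ * g * x).p = x.p⁻¹ * g.p * x.p := rfl
  have hgpxd : g.p (x.p d) = x.p d := by
    have h1 : x.p⁻¹ (g.p (x.p d)) = d := hhpd
    have h2 := congrArg (fun i => x.p i) h1
    simpa only [Equiv.Perm.apply_inv_self] using h2
  have hgpxd' : g.p⁻¹ (x.p d) = x.p d := by
    conv_lhs => rw [← hgpxd]
    rw [Equiv.Perm.inv_apply_self]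
  have hgzxd : g.z (x.p d) = 0 := by
    have h0 := hhzd
    rw [conj_z_apply, hgpxd'] at h0
    linear_combination h0
  have hxpe' : x.p⁻¹ e = e := by
    conv_lhs => rw [← hxe]
    rw [Equiv.Perm.inv_apply_self]
  have hkeyt : (x⁻¹ * g * x).p * Equiv.swap d e * ((x⁻¹ * g * x).p)⁻¹ = Equiv.swap d e :=
    conj_swap_fix hhpd hhpe
  have hkeyw : (x⁻¹ * g * x).p * w.p * ((x⁻¹ * g * x).p)⁻¹ = w.p := by
    have := congrArg WreathG.p hwfix
    simpa using this
  have hkey : (x⁻¹ * g * x).p * (w.p * Equiv.swap d e) * ((x⁻¹ * g * x).p)⁻¹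
      = w.p * Equiv.swap d e := by
    have hsplit : (x⁻¹ * g * x).p * (w.p * Equiv.swap d e) * ((x⁻¹ * g * x).p)⁻¹
        = ((x⁻¹ * g * x).p * w.p * ((x⁻¹ * g * x).p)⁻¹)
          * ((x⁻¹ * g * x).p * Equiv.swap d e * ((x⁻¹ * g * x).p)⁻¹) := by group
    rw [hsplit, hkeyt, hkeyw]
  refine ⟨?_, ?_, ?_, ?_⟩
  · -- fixed point free
    intro j hj
    have hj' : (w.p * Equiv.swap d e) (x.p⁻¹ j) = x.p⁻¹ j := by
      have h1 : x.p ((w.p * Equiv.swap d e) (x.p⁻¹ j)) = j := hj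
      have h2 := congrArg (fun i => x.p⁻¹ i) h1
      simpa only [Equiv.Perm.inv_apply_self] using h2
    set k := x.p⁻¹ j with hk
    by_cases h1 : k = d
    · rw [h1] at hj'
      have he : (w.p * Equiv.swap d e) d = e := by
        show w.p (Equiv.swap d e d) = e
        rw [Equiv.swap_apply_left, hwpe]
      rw [he] at hj'
      exact hde hj'.symm
    · by_cases h2 : k = e
      · rw [h2] at hj'
        have hdd : (w.p * Equiv.swap d e) e = d := by
          show w.p (Equiv.swap d e e) = d
          rw [Equiv.swap_apply_right, hwpd]
        rw [hdd] at hj'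
        exact hde hj'
      · have hkk : (w.p * Equiv.swap d e) k = w.p k := by
          show w.p (Equiv.swap d e k) = w.p k
          rw [Equiv.swap_apply_of_ne_of_ne h1 h2]
        rw [hkk] at hj'
        have hlt : k.val < n - 2 := by
          have hnot : ¬ (n - 2 ≤ k.val) := fun hc => by
            rcases (hd k).mp hc with h | h
            · exact h1 h
            · exact h2 h
          omega
        exact hw2 k hlt hj'
  · -- fixed by absolute conjugation with g
    rw [aconj_aconj]
    refine WreathG.ext ?_ ?_
    · funext j
      have zz := fix_z_inv hwfix (x.p⁻¹ j)
      have harg : ((x⁻¹ * g * x).p)⁻¹ (x.p⁻¹ j) = x.p⁻¹ (g.p⁻¹ j) := by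
        rw [hp_eq]
        show ((x.p⁻¹ * g.p * x.p)⁻¹) (x.p⁻¹ j) = x.p⁻¹ (g.p⁻¹ j)
        rw [mul_inv_rev, mul_inv_rev, inv_inv]
        show x.p⁻¹ (g.p⁻¹ (x.p (x.p⁻¹ j))) = x.p⁻¹ (g.p⁻¹ j)
        rw [Equiv.Perm.apply_inv_self]
      rw [harg] at zz
      exact zz
    · show (g.p * x.p) * (w.p * Equiv.swap d e) * (g.p * x.p)⁻¹
        = x.p * (w.p * Equiv.swap d e) * x.p⁻¹
      rw [hp_eq] at hkey
      conv_rhs => rw [← hkey]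
      group
  · show w.z (x.p⁻¹ e) = 0
    rw [hxpe', hwze]
  · have hvpe : (aconj x.p (liftW w d e)).p e = x.p d := by
      show x.p ((w.p * Equiv.swap d e) (x.p⁻¹ e)) = x.p d
      rw [hxpe']
      show x.p (w.p (Equiv.swap d e e)) = x.p d
      rw [Equiv.swap_apply_right, hwpd]
    rw [hvpe]
    exact hgzxd
end RHSMain
end WreathG
namespace WreathG
section RHSSurj
set_option linter.unusedSectionVars false
set_option linter.unusedVariables false
open Finset Equiv
variable {r n : ℕ} [NeZero r]

lemma liftW_isAbsInv' {u : WreathG r n} (hu : IsAbsInv u) {d e : Fin n}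
    (hpd : u.p d = e) (hpe : u.p e = d) (hzd : u.z d = 0) (hze : u.z e = 0) :
    IsAbsInv (liftW u d e) := by
  constructor
  · rw [sq]
    apply Equiv.ext
    intro j
    show u.p (Equiv.swap d e (u.p (Equiv.swap d e j))) = j
    by_cases h1 : j = d
    · subst h1; rw [Equiv.swap_apply_left, hpe, Equiv.swap_apply_left, hpe]
    · by_cases h2 : j = e
      · subst h2; rw [Equiv.swap_apply_right, hpd, Equiv.swap_apply_right, hpd]
      · rw [Equiv.swap_apply_of_ne_of_ne h1 h2]
        have k1 : u.p j ≠ d := fun hc => h2 (by rw [← hu.p_p j, hc, hpd])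
        have k2 : u.p j ≠ e := fun hc => h1 (by rw [← hu.p_p j, hc, hpe])
        rw [Equiv.swap_apply_of_ne_of_ne k1 k2, hu.p_p]
  · funext j
    show u.z (u.p (Equiv.swap d e j)) = u.z j
    by_cases h1 : j = d
    · subst h1; rw [Equiv.swap_apply_left, hpe]
    · by_cases h2 : j = e
      · subst h2; rw [Equiv.swap_apply_right, hpd]
      · rw [Equiv.swap_apply_of_ne_of_ne h1 h2, hu.z_p]

lemma liftW_liftW (u : WreathG r n) (d e : Fin n) : liftW (liftW u d e) d e = u := by
  refine WreathG.ext rfl ?_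
  rw [liftW_p, liftW_p, mul_assoc, Equiv.swap_mul_self, mul_one]

lemma surj_mem {g x v : WreathG r n} {d e : Fin n} (hde : d ≠ e)
    (hd : ∀ j : Fin n, n - 2 ≤ j.val ↔ (j = d ∨ j = e))
    (hgp : g.p e = e) (hgz : g.z e = 0)
    (hvabs : IsAbsInv v) (hfpf : ∀ j, v.p j ≠ j) (hfix : aconj g.p v = v)
    (hvze : v.z e = 0) (hgza : g.z (v.p e) = 0)
    (hxe : x.p e = e) (hxd : x.p d = v.p e) (hxz : x.z e = 0) :
    (∀ j : Fin n, n - 2 ≤ j.val → ((x⁻¹ * g * x).p j = j ∧ (x⁻¹ * g * x).z j = 0)) ∧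
    IsAbsInv (liftW (aconj x.p⁻¹ v) d e) ∧
    (∀ j : Fin n, n - 2 ≤ j.val →
      ((liftW (aconj x.p⁻¹ v) d e).p j = j ∧ (liftW (aconj x.p⁻¹ v) d e).z j = 0)) ∧
    (∀ j : Fin n, j.val < n - 2 → (liftW (aconj x.p⁻¹ v) d e).p j ≠ j) ∧
    aconj (x⁻¹ * g * x).p (liftW (aconj x.p⁻¹ v) d e) = liftW (aconj x.p⁻¹ v) d e ∧
    aconj x.p (liftW (liftW (aconj x.p⁻¹ v) d e) d e) = v := by
  set u := aconj x.p⁻¹ v with hu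
  have hane : v.p e ≠ e := hfpf e
  have hvpa : v.p (v.p e) = e := hvabs.p_p e
  have hvza : v.z (v.p e) = 0 := by rw [hvabs.z_p]; exact hvze
  have hgpa : g.p (v.p e) = v.p e := by
    have h1 := fix_comm hfix e
    rwa [hgp] at h1
  have hgpa' : g.p⁻¹ (v.p e) = v.p e := by
    conv_lhs => rw [← hgpa]; rw [Equiv.Perm.inv_apply_self]
  have hgpe' : g.p⁻¹ e = e := by
    conv_lhs => rw [← hgp]; rw [Equiv.Perm.inv_apply_self]
  have hxpe' : x.p⁻¹ e = e := by
    conv_lhs => rw [← hxe]; rw [Equiv.Perm.inv_apply_self]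
  have hxpa' : x.p⁻¹ (v.p e) = d := by
    conv_lhs => rw [← hxd]; rw [Equiv.Perm.inv_apply_self]
  have hu_abs : IsAbsInv u := hvabs.aconj x.p⁻¹
  have hup : ∀ j, u.p j = x.p⁻¹ (v.p (x.p j)) := by
    intro j
    show x.p⁻¹ (v.p ((x.p⁻¹)⁻¹ j)) = x.p⁻¹ (v.p (x.p j))
    rw [inv_inv]
  have huz : ∀ j, u.z j = v.z (x.p j) := by
    intro j
    show v.z ((x.p⁻¹).symm j) = v.z (x.p j)
    rfl
  have hupe : u.p e = d := by rw [hup, hxe, hxpa']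
  have hupd : u.p d = e := by rw [hup, hxd, hvpa, hxpe']
  have huzd : u.z d = 0 := by rw [huz, hxd, hvza]
  have huze : u.z e = 0 := by rw [huz, hxe, hvze]
  have hufpf : ∀ j, u.p j ≠ j := by
    intro j hc
    rw [hup] at hc
    have := congrArg (fun i => x.p i) hc
    simp only [Equiv.Perm.apply_inv_self] at this
    exact hfpf (x.p j) this
  have hw_abs : IsAbsInv (liftW u d e) := liftW_isAbsInv' hu_abs hupd hupe huzd huze
  have hwpd : (liftW u d e).p d = d := by
    rw [liftW_p_apply, Equiv.swap_apply_left, hupe]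
  have hwpe : (liftW u d e).p e = e := by
    rw [liftW_p_apply, Equiv.swap_apply_right, hupd]
  have hhpd : (x⁻¹ * g * x).p d = d := by
    rw [conj_p_apply, hxd, hgpa, hxpa']
  have hhpe : (x⁻¹ * g * x).p e = e := by
    rw [conj_p_apply, hxe, hgp, hxpe']
  refine ⟨?_, hw_abs, ?_, ?_, ?_, ?_⟩
  · -- x⁻¹gx ∈ G(r, n-2)
    intro j hj
    rcases (hd j).mp hj with h | h <;> subst h
    · refine ⟨hhpd, ?_⟩
      rw [conj_z_apply, hxd, hgpa', hgza]
      ring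
    · refine ⟨hhpe, ?_⟩
      rw [conj_z_apply, hxe, hgpe', hgz]
      ring
  · -- w ∈ G(r,n-2) fixed points
    intro j hj
    rcases (hd j).mp hj with h | h <;> subst h
    · exact ⟨hwpd, huzd⟩
    · exact ⟨hwpe, huze⟩
  · -- fpf below n-2
    intro j hj hc
    have hdm : n - 2 ≤ d.val := (hd d).mpr (Or.inl rfl)
    have hem : n - 2 ≤ e.val := (hd e).mpr (Or.inr rfl)
    have hjd : j ≠ d := fun hh => by rw [hh] at hj; omega
    have hje : j ≠ e := fun hh => by rw [hh] at hj; omega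
    rw [liftW_p_apply, Equiv.swap_apply_of_ne_of_ne hjd hje] at hc
    exact hufpf j hc
  · -- fixed by aconj h.p
    have hfp : g.p * v.p * g.p⁻¹ = v.p := by
      have := congrArg WreathG.p hfix; simpa using this
    refine WreathG.ext ?_ ?_
    · funext j
      show u.z (((x⁻¹ * g * x).p).symm j) = u.z j
      rw [huz, huz]
      have harg : x.p (((x⁻¹ * g * x).p).symm j) = g.p⁻¹ (x.p j) := by
        show x.p (((x.p⁻¹ * g.p * x.p))⁻¹ j) = _
        rw [mul_inv_rev, mul_inv_rev, inv_inv]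
        show x.p (x.p⁻¹ (g.p⁻¹ (x.p j))) = g.p⁻¹ (x.p j)
        rw [Equiv.Perm.apply_inv_self]
      rw [harg, fix_z_inv hfix]
    · show (x⁻¹ * g * x).p * (liftW u d e).p * ((x⁻¹ * g * x).p)⁻¹ = (liftW u d e).p
      rw [liftW_p]
      have hsplit : (x⁻¹ * g * x).p * (u.p * Equiv.swap d e) * ((x⁻¹ * g * x).p)⁻¹
          = ((x⁻¹ * g * x).p * u.p * ((x⁻¹ * g * x).p)⁻¹)
            * ((x⁻¹ * g * x).p * Equiv.swap d e * ((x⁻¹ * g * x).p)⁻¹) := by group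
      rw [hsplit, conj_swap_fix hhpd hhpe]
      congr 1
      show (x⁻¹ * g * x).p * (x.p⁻¹ * v.p * (x.p⁻¹)⁻¹) * ((x⁻¹ * g * x).p)⁻¹
          = x.p⁻¹ * v.p * (x.p⁻¹)⁻¹
      have hp_eq : (x⁻¹ * g * x).p = x.p⁻¹ * g.p * x.p := rfl
      rw [hp_eq]
      conv_rhs => rw [← hfp]
      group
  · -- recovers v
    rw [liftW_liftW]
    exact aconj_inv_cancel x.p v
end RHSSurj
end WreathG
section RHSFinal
set_option linter.unusedSectionVars false
set_option linter.unusedVariables false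
open Finset Equiv WreathG
variable {r : ℕ} [NeZero r]

lemma rhs_fiber {n : ℕ} (g : WreathG r n) (d e : Fin n) (hde : d ≠ e)
    (hd : ∀ j : Fin n, n - 2 ≤ j.val ↔ (j = d ∨ j = e))
    (hgp : g.p e = e) (hgz : g.z e = 0) :
    ∑ x ∈ Finset.univ.filter (fun x : WreathG r n =>
        (x.p e = e ∧ x.z e = 0) ∧
        (∀ j : Fin n, n - 2 ≤ j.val → ((x⁻¹ * g * x).p j = j ∧ (x⁻¹ * g * x).z j = 0))),
      ∑ w ∈ Finset.univ.filter (fun w : AbsInv r n =>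
          (∀ j : Fin n, n - 2 ≤ j.val → (w.1.p j = j ∧ w.1.z j = 0)) ∧
          (∀ j : Fin n, j.val < n - 2 → w.1.p j ≠ j) ∧
          WreathG.aconj (x⁻¹ * g * x).p w.1 = w.1),
        zetaPow r (WreathG.pairing (x⁻¹ * g * x) w.1)
    = ∑ v ∈ Finset.univ.filter (fun v : AbsInv r n =>
        ((∀ j, v.1.p j ≠ j) ∧ WreathG.aconj g.p v.1 = v.1) ∧
          v.1.z e = 0 ∧ g.z (v.1.p e) = 0),
      ((r : ℂ) ^ (n - 1) * ((n - 2).factorial : ℂ)) * zetaPow r (WreathG.pairing g v.1) := by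
  classical
  rw [Finset.sum_sigma']
  set S := (Finset.univ.filter (fun x : WreathG r n =>
      (x.p e = e ∧ x.z e = 0) ∧
      (∀ j : Fin n, n - 2 ≤ j.val → ((x⁻¹ * g * x).p j = j ∧ (x⁻¹ * g * x).z j = 0)))).sigma
      (fun x => Finset.univ.filter (fun w : AbsInv r n =>
          (∀ j : Fin n, n - 2 ≤ j.val → (w.1.p j = j ∧ w.1.z j = 0)) ∧
          (∀ j : Fin n, j.val < n - 2 → w.1.p j ≠ j) ∧
          WreathG.aconj (x⁻¹ * g * x).p w.1 = w.1)) with hS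
  set Φ : ((_ : WreathG r n) × AbsInv r n) → AbsInv r n := fun p =>
    if h : WreathG.IsAbsInv (aconj p.1.p (liftW p.2.1 d e)) then ⟨_, h⟩ else p.2 with hΦ
  have memS : ∀ p : ((_ : WreathG r n) × AbsInv r n), p ∈ S ↔
      (((p.1.p e = e ∧ p.1.z e = 0) ∧
        (∀ j : Fin n, n - 2 ≤ j.val →
          ((p.1⁻¹ * g * p.1).p j = j ∧ (p.1⁻¹ * g * p.1).z j = 0))) ∧
       ((∀ j : Fin n, n - 2 ≤ j.val → (p.2.1.p j = j ∧ p.2.1.z j = 0)) ∧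
        (∀ j : Fin n, j.val < n - 2 → p.2.1.p j ≠ j) ∧
        WreathG.aconj (p.1⁻¹ * g * p.1).p p.2.1 = p.2.1)) := by
    intro p
    rw [hS, Finset.mem_sigma, Finset.mem_filter, Finset.mem_filter]
    simp only [Finset.mem_univ, true_and]
  have hliftabs : ∀ p : ((_ : WreathG r n) × AbsInv r n), p ∈ S →
      WreathG.IsAbsInv (aconj p.1.p (liftW p.2.1 d e)) := by
    intro p hp
    rw [memS] at hp
    have hdm : n - 2 ≤ d.val := (hd d).mpr (Or.inl rfl)
    have hem : n - 2 ≤ e.val := (hd e).mpr (Or.inr rfl)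
    have hlw : WreathG.IsAbsInv (liftW p.2.1 d e) :=
      liftW_isAbsInv p.2.2 (hp.2.1 d hdm).1 (hp.2.1 e hem).1 (hp.2.1 d hdm).2 (hp.2.1 e hem).2
    exact hlw.aconj p.1.p
  have hΦval : ∀ p ∈ S, (Φ p).1 = aconj p.1.p (liftW p.2.1 d e) := by
    intro p hp
    rw [hΦ]
    simp only [dif_pos (hliftabs p hp)]
  have hmaps : ∀ p ∈ S, Φ p ∈ Finset.univ.filter (fun v : AbsInv r n =>
      ((∀ j, v.1.p j ≠ j) ∧ WreathG.aconj g.p v.1 = v.1) ∧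
        v.1.z e = 0 ∧ g.z (v.1.p e) = 0) := by
    intro p hp
    have hv := hΦval p hp
    rw [memS] at hp
    obtain ⟨⟨⟨hxe, hxz⟩, hxc⟩, hw1, hw2, hwfix⟩ := hp
    have key := phi_mem (g := g) (x := p.1) (w := p.2.1) hde hd hgz hxe hxz hxc p.2.2 hw1 hw2 hwfix
    rw [Finset.mem_filter]
    refine ⟨Finset.mem_univ _, ?_⟩
    rw [hv]
    exact ⟨⟨key.1, key.2.1⟩, key.2.2.1, key.2.2.2⟩
  rw [← Finset.sum_fiberwise_of_maps_to hmaps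
    (fun p => zetaPow r (WreathG.pairing (p.1⁻¹ * g * p.1) p.2.1))]
  apply Finset.sum_congr rfl
  intro v hv
  rw [Finset.mem_filter] at hv
  obtain ⟨-, ⟨hfpf, hfix⟩, hvze, hgza⟩ := hv
  -- each term in the fiber contributes the same value
  have hterm : ∀ p ∈ S.filter (fun p => Φ p = v),
      zetaPow r (WreathG.pairing (p.1⁻¹ * g * p.1) p.2.1)
        = zetaPow r (WreathG.pairing g v.1) := by
    intro p hp
    rw [Finset.mem_filter] at hp
    obtain ⟨hpS, hpv⟩ := hp
    have hv1 : v.1 = aconj p.1.p (liftW p.2.1 d e) := by rw [← hpv]; exact hΦval p hpS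
    rw [memS] at hpS
    obtain ⟨⟨⟨hxe, hxz⟩, hxc⟩, hw1, hw2, hwfix⟩ := hpS
    have hwz : ∀ j, p.2.1.z ((p.1⁻¹ * g * p.1).p j) = p.2.1.z j :=
      fun j => fix_z hwfix j
    rw [pairing_conj g p.1 p.2.1 hwz, hv1, pairing_aconj]
    rfl
  rw [Finset.sum_congr rfl hterm, Finset.sum_const, nsmul_eq_mul]
  congr 1
  -- count the fiber
  have hane : v.1.p e ≠ e := hfpf e
  set Ψ : WreathG r n → AbsInv r n := fun x =>
    if h : WreathG.IsAbsInv (liftW (aconj x.p⁻¹ v.1) d e)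
    then (⟨liftW (aconj x.p⁻¹ v.1) d e, h⟩ : AbsInv r n) else v with hΨ
  have hcard : (S.filter (fun p => Φ p = v)).card
      = (Finset.univ.filter (fun x : WreathG r n =>
          x.p e = e ∧ x.p d = v.1.p e ∧ x.z e = 0)).card := by
    apply Finset.card_nbij' (i := fun p => p.1) (j := fun x => ⟨x, Ψ x⟩)
    · -- maps fiber into X_v
      intro p hp
      rw [Finset.mem_coe, Finset.mem_filter] at hp ⊢
      obtain ⟨hpS, hpv⟩ := hp
      have hv1 : v.1 = aconj p.1.p (liftW p.2.1 d e) := by rw [← hpv]; exact hΦval p hpS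
      rw [memS] at hpS
      obtain ⟨⟨⟨hxe, hxz⟩, hxc⟩, hw1, hw2, hwfix⟩ := hpS
      refine ⟨Finset.mem_univ _, hxe, ?_, hxz⟩
      have hxpe' : p.1.p⁻¹ e = e := by
        conv_lhs => rw [← hxe]
        rw [Equiv.Perm.inv_apply_self]
      have hdm : n - 2 ≤ d.val := (hd d).mpr (Or.inl rfl)
      have hwpd : p.2.1.p d = d := (hw1 d hdm).1
      have hthis : v.1.p e = p.1.p d := by
        rw [hv1]
        show p.1.p ((p.2.1.p * Equiv.swap d e) (p.1.p⁻¹ e)) = p.1.p d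
        rw [hxpe']
        show p.1.p (p.2.1.p (Equiv.swap d e e)) = p.1.p d
        rw [Equiv.swap_apply_right, hwpd]
      rw [hthis]
    · -- X_v maps into the fiber
      intro x hx
      rw [Finset.mem_coe, Finset.mem_filter] at hx
      obtain ⟨-, hxe, hxd, hxz⟩ := hx
      have key := surj_mem hde hd hgp hgz v.2 hfpf hfix hvze hgza hxe hxd hxz
      have habs : WreathG.IsAbsInv (liftW (aconj x.p⁻¹ v.1) d e) := key.2.1
      have hΨx : (Ψ x).1 = liftW (aconj x.p⁻¹ v.1) d e := by
        simp only [hΨ, dif_pos habs]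
      have hmem : (⟨x, Ψ x⟩ : ((_ : WreathG r n) × AbsInv r n)) ∈ S := by
        rw [memS]
        refine ⟨⟨⟨hxe, hxz⟩, key.1⟩, ?_, ?_, ?_⟩
        · show ∀ j : Fin n, n - 2 ≤ j.val → ((Ψ x).1.p j = j ∧ (Ψ x).1.z j = 0)
          rw [hΨx]; exact key.2.2.1
        · show ∀ j : Fin n, j.val < n - 2 → (Ψ x).1.p j ≠ j
          rw [hΨx]; exact key.2.2.2.1
        · show aconj (x⁻¹ * g * x).p (Ψ x).1 = (Ψ x).1
          rw [hΨx]; exact key.2.2.2.2.1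
      rw [Finset.mem_coe, Finset.mem_filter]
      refine ⟨hmem, ?_⟩
      apply Subtype.ext
      rw [hΦval _ hmem]
      show aconj x.p (liftW (Ψ x).1 d e) = v.1
      rw [hΨx]
      exact key.2.2.2.2.2
    · -- left inverse
      intro p hp
      rw [Finset.mem_coe, Finset.mem_filter] at hp
      obtain ⟨hpS, hpv⟩ := hp
      have hv1 : v.1 = aconj p.1.p (liftW p.2.1 d e) := by rw [← hpv]; exact hΦval p hpS
      have hback : aconj p.1.p⁻¹ v.1 = liftW p.2.1 d e := by
        rw [hv1, aconj_cancel_left]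
      obtain ⟨x, w⟩ := p
      simp only at hback ⊢
      have hl : liftW (aconj x.p⁻¹ v.1) d e = w.1 := by
        rw [hback, liftW_liftW]
      have hΨw : Ψ x = w := by
        rw [hΨ]
        simp only [dif_pos (hl ▸ w.2)]
        exact Subtype.ext hl
      rw [hΨw]
    · intro x hx
      rfl
  rw [hcard, card_X d e (v.1.p e) hde hane]
  push_cast
  ring
end RHSFinal
set_option maxHeartbeats 2000000 in
/-- For `g ∈ G(r,2m−1)`, the character at `g` of the restriction to
`G(r,2m−1)` of the representation `φ` of `G(r,2m)` on the span of the `C_v` with `v` a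
fixed-point-free absolute involution equals the character at `g` induced from the
representation `φ` of `G(r,2m−2)` on the span of the `C_w` with `w` a fixed-point-free
absolute involution of `G(r,2m−2)`. -/
theorem restriction_char_eq_induced_char (r m : ℕ) [NeZero r] (hm : 1 ≤ m)
    (g : WreathG r (2 * m))
    (hgp : g.p ⟨2 * m - 1, by omega⟩ = ⟨2 * m - 1, by omega⟩)
    (hgz : g.z ⟨2 * m - 1, by omega⟩ = 0) :
    ((r : ℂ) ^ (2 * m - 2) * (Nat.factorial (2 * m - 2) : ℂ)) *
      ∑ v ∈ Finset.univ.filter (fun v : AbsInv r (2 * m) =>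
          (∀ j, v.1.p j ≠ j) ∧ WreathG.aconj g.p v.1 = v.1),
        zetaPow r (WreathG.pairing g v.1)
    = ∑ x ∈ Finset.univ.filter (fun x : WreathG r (2 * m) =>
          (x.p ⟨2 * m - 1, by omega⟩ = ⟨2 * m - 1, by omega⟩ ∧
            x.z ⟨2 * m - 1, by omega⟩ = 0) ∧
          (∀ j : Fin (2 * m), 2 * m - 2 ≤ j.val →
            ((x⁻¹ * g * x).p j = j ∧ (x⁻¹ * g * x).z j = 0))),
        ∑ w ∈ Finset.univ.filter (fun w : AbsInv r (2 * m) =>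
            (∀ j : Fin (2 * m), 2 * m - 2 ≤ j.val → (w.1.p j = j ∧ w.1.z j = 0)) ∧
            (∀ j : Fin (2 * m), j.val < 2 * m - 2 → w.1.p j ≠ j) ∧
            WreathG.aconj (x⁻¹ * g * x).p w.1 = w.1),
          zetaPow r (WreathG.pairing (x⁻¹ * g * x) w.1) := by
  have hde : (⟨2 * m - 2, by omega⟩ : Fin (2 * m)) ≠ ⟨2 * m - 1, by omega⟩ := by
    simp only [ne_eq, Fin.mk.injEq]
    omega
  have hd : ∀ j : Fin (2 * m), 2 * m - 2 ≤ j.val ↔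
      (j = ⟨2 * m - 2, by omega⟩ ∨ j = ⟨2 * m - 1, by omega⟩) := by
    intro j
    have hj := j.isLt
    simp only [Fin.ext_iff]
    omega
  rw [rhs_fiber g ⟨2 * m - 2, by omega⟩ ⟨2 * m - 1, by omega⟩ hde hd hgp hgz]
  rw [lhs_recolor g ⟨2 * m - 1, by omega⟩ hgp hgz]
  rw [← Finset.mul_sum]
  have hpow : ((r : ℂ) ^ (2 * m - 2)) * (r : ℂ) = (r : ℂ) ^ (2 * m - 1) := by
    rw [← pow_succ]
    congr 1
    omega
  rw [show ((r : ℂ) ^ (2 * m - 1) * ((Nat.factorial (2 * m - 2)) : ℂ))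
      = ((r : ℂ) ^ (2 * m - 2) * ((Nat.factorial (2 * m - 2)) : ℂ)) * (r : ℂ) from by
    rw [← hpow]; ring]
  ring
end
end
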